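/- Let P be an N×N doubly stochastic matrix such that A(P) = I − P + (1/N)eeᵀ is nonsingular, and let I − P = LU be its LU decomposition with L unit lower triangular and U upper triangular with diagonal entries u_{ii}. Then det(A(P)) = N · ∏_{i=1}^{N−1} u_{ii}. -/

import Mathlib

open Matrix

/-- det(A(P)) = N ∏_{i=1}^{N−1} u_{ii}, where A(P) = I − P + (1/N)eeᵀ and
I − P = LU. -/
theorem det_A_eq_N_mul_prod_u (N : ℕ) (P : Matrix (Fin (N + 1)) (Fin (N + 1)) ℝ)
    (hnonneg : ∀ i j, 0 ≤ P i j)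
    (hrow : ∀ i, ∑ j, P i j = 1)
    (hcol : ∀ j, ∑ i, P i j = 1)
    (hA : (1 - P + ((N + 1 : ℝ))⁻¹ • vecMulVec (fun _ => (1 : ℝ)) (fun _ => (1 : ℝ))).det ≠ 0)
    (L U : Matrix (Fin (N + 1)) (Fin (N + 1)) ℝ)
    (hLdiag : ∀ i, L i i = 1)
    (hLlow : ∀ i j : Fin (N + 1), i < j → L i j = 0)
    (hUup : ∀ i j : Fin (N + 1), j < i → U i j = 0)
    (hLU : 1 - P = L * U) :
    (1 - P + ((N + 1 : ℝ))⁻¹ • vecMulVec (fun _ => (1 : ℝ)) (fun _ => (1 : ℝ))).det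
      = (N + 1 : ℝ) * ∏ i ∈ Finset.univ.erase (Fin.last N), U i i := by
  have hN1 : (N : ℝ) + 1 ≠ 0 := by positivity
  set c : ℝ := ((N : ℝ) + 1)⁻¹ with hcdef
  set B : Matrix (Fin (N + 1)) (Fin (N + 1)) ℝ :=
    1 - P + c • vecMulVec (fun _ => (1 : ℝ)) (fun _ => (1 : ℝ)) with hBdef
  have hBapply : ∀ j k, B j k = (1 - P) j k + c := by
    intro j k
    simp [hBdef, vecMulVec_apply, Matrix.add_apply]
  -- row sums of 1 - P are 0
  have hrowA : ∀ j, ∑ m, (1 - P) j m = 0 := by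
    intro j
    simp [Matrix.sub_apply, Finset.sum_sub_distrib, Matrix.one_apply, hrow]
  have hcolA : ∀ k, ∑ m, (1 - P) m k = 0 := by
    intro k
    simp [Matrix.sub_apply, Finset.sum_sub_distrib, Matrix.one_apply, hcol]
  -- row sums of B are 1
  have hrowB : ∀ j, ∑ m, B j m = 1 := by
    intro j
    simp only [hBapply]
    rw [Finset.sum_add_distrib, hrowA]
    simp [hcdef, Finset.card_univ, mul_comm]
    field_simp
  -- the two elementary matrices
  set K : Matrix (Fin (N + 1)) (Fin (N + 1)) ℝ :=
    fun j k => if k = Fin.last N then 1 else if j = k then 1 else 0 with hKdef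
  set K2 : Matrix (Fin (N + 1)) (Fin (N + 1)) ℝ :=
    fun j k => if j = Fin.last N ∧ k ≠ Fin.last N then -c else if j = k then 1 else 0 with hK2def
  have hdetK : K.det = 1 := by
    rw [Matrix.det_of_upperTriangular]
    · simp [hKdef]
    · intro i j hij
      have h1 : j ≠ Fin.last N := by
        intro h; subst h; exact absurd (Fin.le_last i) (not_le.mpr hij)
      have h2 : i ≠ j := ne_of_gt hij
      simp [hKdef, h1, h2]
  have hdetK2 : K2.det = 1 := by
    rw [Matrix.det_of_lowerTriangular]
    · simp [hK2def, Fin.last]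
    · intro i j hij
      have hij' : (i : Fin (N+1)) < j := hij
      have h1 : i ≠ Fin.last N := by
        intro h; subst h; exact absurd (Fin.le_last j) (not_le.mpr hij')
      have h2 : i ≠ j := ne_of_lt hij'
      simp [hK2def, h1, h2]
  have hdetL : L.det = 1 := by
    rw [Matrix.det_of_lowerTriangular]
    · simp [hLdiag]
    · intro i j hij
      exact hLlow i j hij
  have hLunit : IsUnit L.det := by rw [hdetL]; exact isUnit_one
  set v : Fin (N + 1) → ℝ := L⁻¹ *ᵥ (fun _ => (1 : ℝ)) with hvdef
  have hLv : L *ᵥ v = fun _ => (1 : ℝ) := by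
    rw [hvdef, Matrix.mulVec_mulVec, Matrix.mul_nonsing_inv L hLunit, Matrix.one_mulVec]
  have hBK : B * K = B.updateCol (Fin.last N) (fun _ => (1 : ℝ)) := by
    ext j k
    rw [Matrix.mul_apply, Matrix.updateCol_apply]
    by_cases hk : k = Fin.last N
    · simp only [hk, if_pos rfl, hKdef, mul_one]
      simpa using hrowB j
    · simp only [hk, if_neg hk, hKdef]
      rw [Finset.sum_eq_single k]
      · simp [hk]
      · intro m _ hm
        simp [hk, hm]
      · simp
  have hBKK2 : B * K * K2 = (1 - P).updateCol (Fin.last N) (fun _ => (1 : ℝ)) := by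
    rw [hBK]
    ext j k
    rw [Matrix.mul_apply]
    by_cases hk : k = Fin.last N
    · subst hk
      rw [Finset.sum_eq_single (Fin.last N)]
      · simp [hK2def, Matrix.updateCol_apply]
      · intro m _ hm
        simp [hK2def, hm]
      · simp
    · have hlk : Fin.last N ≠ k := fun h => hk h.symm
      have hsplit : ∀ m : Fin (N + 1),
          K2 m k = (if m = k then (1:ℝ) else 0) + (if m = Fin.last N then -c else 0) := by
        intro m
        by_cases hm : m = Fin.last N
        · subst hm
          simp [hK2def, hk, hlk]
        · by_cases hmk : m = k <;> simp [hK2def, hm, hmk, hk]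
      simp only [hsplit, mul_add, Finset.sum_add_distrib]
      rw [Finset.sum_eq_single k (by intro m _ hm; simp [hm]) (by simp),
          Finset.sum_eq_single (Fin.last N) (by intro m _ hm; simp [hm]) (by simp),
          if_pos rfl, if_pos rfl, mul_one, Matrix.updateCol_apply,
          Matrix.updateCol_apply, Matrix.updateCol_apply]
      rw [if_neg hk, if_pos rfl, if_neg hk, hBapply]
      ring
  set M : Matrix (Fin (N + 1)) (Fin (N + 1)) ℝ := U.updateCol (Fin.last N) v with hMdef
  have hLM : L * M = (1 - P).updateCol (Fin.last N) (fun _ => (1 : ℝ)) := by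
    ext i k
    rw [Matrix.mul_apply, Matrix.updateCol_apply]
    by_cases hk : k = Fin.last N
    · subst hk
      rw [if_pos rfl]
      have : ∀ m, M m (Fin.last N) = v m := by
        intro m; simp [hMdef, Matrix.updateCol_apply]
      simp only [this]
      have := congrFun hLv i
      simpa [Matrix.mulVec, dotProduct] using this
    · rw [if_neg hk]
      have : ∀ m, M m k = U m k := by
        intro m; simp [hMdef, Matrix.updateCol_apply, hk]
      simp only [this]
      rw [← Matrix.mul_apply, ← hLU]
  -- determinant chain
  have hdetB : B.det = M.det := by
    have h1 : (B * K * K2).det = B.det := by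
      rw [Matrix.det_mul, Matrix.det_mul, hdetK, hdetK2, mul_one, mul_one]
    have h2 : (L * M).det = M.det := by
      rw [Matrix.det_mul, hdetL, one_mul]
    rw [← h1, hBKK2, ← hLM, h2]
  -- cofactor expansion of det M along the last row
  have hdetM : M.det = v (Fin.last N) * ∏ i : Fin N, U i.castSucc i.castSucc := by
    rw [Matrix.det_succ_row M (Fin.last N)]
    rw [Finset.sum_eq_single (Fin.last N)]
    · have hMll : M (Fin.last N) (Fin.last N) = v (Fin.last N) := by
        simp [hMdef, Matrix.updateCol_apply]
      have hsub : (M.submatrix (Fin.last N).succAbove (Fin.last N).succAbove).det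
          = ∏ i : Fin N, U i.castSucc i.castSucc := by
        have hentry : ∀ i j : Fin N,
            M.submatrix (Fin.last N).succAbove (Fin.last N).succAbove i j
              = U i.castSucc j.castSucc := by
          intro i j
          simp [Matrix.submatrix_apply, Fin.succAbove_last, hMdef,
            Matrix.updateCol_apply, (Fin.castSucc_lt_last j).ne]
        rw [Matrix.det_of_upperTriangular]
        · exact Finset.prod_congr rfl fun i _ => by rw [hentry]
        · intro i j hij
          rw [hentry]
          exact hUup _ _ (Fin.strictMono_castSucc hij)
      rw [hMll, hsub]
      have : (-1 : ℝ) ^ ((Fin.last N : ℕ) + (Fin.last N : ℕ)) = 1 := by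
        rw [← two_mul, pow_mul]
        norm_num
      rw [this, one_mul]
    · intro j _ hj
      have hjlt : j < Fin.last N := Fin.lt_last_iff_ne_last.mpr hj
      have : M (Fin.last N) j = 0 := by
        rw [hMdef, Matrix.updateCol_apply, if_neg hj]
        exact hUup _ _ hjlt
      rw [this, mul_zero, zero_mul]
    · simp
  -- rewrite the product over the erased set
  have hprodeq : ∏ i ∈ Finset.univ.erase (Fin.last N), U i i
      = ∏ i : Fin N, U i.castSucc i.castSucc := by
    rw [show Finset.univ.erase (Fin.last N)
        = Finset.image Fin.castSucc Finset.univ from by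
      ext x
      simp [Fin.exists_castSucc_eq, eq_comm]]
    rw [Finset.prod_image (fun a _ b _ h => Fin.castSucc_injective N h)]
  have hdetB' : B.det = v (Fin.last N) * ∏ i ∈ Finset.univ.erase (Fin.last N), U i i := by
    rw [hdetB, hdetM, hprodeq]
  -- the product is nonzero
  have hprodne : (∏ i ∈ Finset.univ.erase (Fin.last N), U i i) ≠ 0 := by
    intro h
    apply hA
    rw [hdetB', h, mul_zero]
  have hUne : ∀ i : Fin (N + 1), i ≠ Fin.last N → U i i ≠ 0 := by
    intro i hi
    exact Finset.prod_ne_zero_iff.mp hprodne i (Finset.mem_erase.mpr ⟨hi, Finset.mem_univ i⟩)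
  -- the vector of column sums of L
  set w : Fin (N + 1) → ℝ := fun m => ∑ i, L i m with hwdef
  have hwU : ∀ k, ∑ m, w m * U m k = 0 := by
    intro k
    simp only [hwdef, Finset.sum_mul]
    rw [Finset.sum_comm]
    have : ∀ i, ∑ m, L i m * U m k = (1 - P) i k := by
      intro i; rw [← Matrix.mul_apply, ← hLU]
    simp only [this]
    exact hcolA k
  have hw0 : ∀ (n : ℕ) (j : Fin (N + 1)), (j : ℕ) < n → j ≠ Fin.last N → w j = 0 := by
    intro n
    induction n with
    | zero => intro j hj; omega
    | succ n ih =>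
      intro j hjn hj
      have hsum := hwU j
      rw [Finset.sum_eq_single j] at hsum
      · exact (mul_eq_zero.mp hsum).resolve_right (hUne j hj)
      · intro m _ hm
        rcases lt_or_gt_of_ne hm with hlt | hgt
        · have hmn : (m : ℕ) < n := by
            have := hlt
            have h1 : (m : ℕ) < (j : ℕ) := hlt
            omega
          have hmne : m ≠ Fin.last N := by
            apply Fin.lt_last_iff_ne_last.mp
            exact lt_of_lt_of_le hlt (Fin.le_last j)
          rw [ih m hmn hmne, zero_mul]
        · rw [hUup m j hgt, mul_zero]
      · simp
  have hwlast : w (Fin.last N) = 1 := by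
    show (∑ i, L i (Fin.last N)) = 1
    rw [Finset.sum_eq_single (Fin.last N)]
    · exact hLdiag _
    · intro i _ hi
      exact hLlow i (Fin.last N) (Fin.lt_last_iff_ne_last.mpr hi)
    · simp
  -- v (last) = N + 1
  have hvlast : v (Fin.last N) = (N : ℝ) + 1 := by
    have h1 : ∑ m, w m * v m = v (Fin.last N) := by
      rw [Finset.sum_eq_single (Fin.last N)]
      · rw [hwlast, one_mul]
      · intro m _ hm
        rw [hw0 (N + 1) m m.isLt hm, zero_mul]
      · simp
    have h2 : ∑ m, w m * v m = (N : ℝ) + 1 := by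
      simp only [hwdef, Finset.sum_mul]
      rw [Finset.sum_comm]
      have : ∀ i, ∑ m, L i m * v m = 1 := by
        intro i
        have := congrFun hLv i
        simpa [Matrix.mulVec, dotProduct] using this
      simp only [this]
      simp [Finset.card_univ]
    rw [← h1, h2]
  rw [hdetB', hvlast]
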